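/- Let W, V ∈ ℂ^{n×p} and suppose the quadruple (λ,z,μ,y) ∈ ℂ × ℂᵖ × ℂ × ℂᵐ is such that cᵀy = 1 and the Jacobian J(λ,μ,y) is invertible. Then (λ,z,μ,y) solves the projected two-parameter eigenvalue problem Wᵀ(A₁ + λA₂ + μA₃)Vz = 0 and (B₁ + λB₂ + μB₃)y = 0, if and only if there exist functions g : ℂ → ℂ and Y : ℂ → ℂᵐ, analytic at λ, with g(λ) = μ and Y(λ) = y, such that B(s,g(s))Y(s) = 0 and cᵀY(s) = 1 for all s in some neighborhood of λ, and (WᵀA₁V + λ WᵀA₂V + g(λ) WᵀA₃V)z = 0. -/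

import Mathlib

open Matrix Filter


private lemma analyticAt_matrix_det {E : Type*} [NormedAddCommGroup E] [NormedSpace ℂ E]
    {ι : Type*} [Fintype ι] [DecidableEq ι] {f : E → Matrix ι ι ℂ} {x : E}
    (h : ∀ i j, AnalyticAt ℂ (fun x => f x i j) x) :
    AnalyticAt ℂ (fun x => (f x).det) x := by
  simp only [Matrix.det_apply']
  exact Finset.analyticAt_fun_sum _ fun σ _ =>
    analyticAt_const.mul (Finset.analyticAt_fun_prod _ fun i _ => h (σ i) i)


private noncomputable def shearEquiv (a b : ℂ) (hb : b ≠ 0) : (ℂ × ℂ) ≃L[ℂ] (ℂ × ℂ) :=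
  LinearEquiv.toContinuousLinearEquiv
  { toFun := fun q => (q.1, a * q.1 + b * q.2)
    invFun := fun q => (q.1, b⁻¹ * (q.2 - a * q.1))
    map_add' := by intro q r; simp [Prod.ext_iff]; ring
    map_smul' := by intro t q; simp [Prod.ext_iff, smul_eq_mul]; ring
    left_inv := by intro q; simp [Prod.ext_iff]; field_simp
    right_inv := by intro q; simp [Prod.ext_iff]; field_simp; ring }

private lemma shearEquiv_apply (a b : ℂ) (hb : b ≠ 0) (q : ℂ × ℂ) :
    shearEquiv a b hb q = (q.1, a * q.1 + b * q.2) := rfl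

private lemma exists_analytic_branch (m : ℕ)
    (B₁ B₂ B₃ : Matrix (Fin m) (Fin m) ℂ) (c : Fin m → ℂ)
    (lam μ : ℂ) (y : Fin m → ℂ)
    (hc : c ⬝ᵥ y = 1)
    (hJ : IsUnit (Matrix.fromBlocks (B₁ + lam • B₂ + μ • B₃)
        (Matrix.replicateCol (Fin 1) (B₃ *ᵥ y)) (Matrix.replicateRow (Fin 1) c) 0))
    (hB : (B₁ + lam • B₂ + μ • B₃) *ᵥ y = 0) :
    ∃ (g : ℂ → ℂ) (Y : ℂ → (Fin m → ℂ)),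
      AnalyticAt ℂ g lam ∧ AnalyticAt ℂ Y lam ∧ g lam = μ ∧ Y lam = y ∧
      (∀ᶠ s in nhds lam,
        (B₁ + s • B₂ + g s • B₃) *ᵥ (Y s) = 0 ∧ c ⬝ᵥ (Y s) = 1) := by
  classical
  set J : Matrix (Fin m ⊕ Fin 1) (Fin m ⊕ Fin 1) ℂ :=
    Matrix.fromBlocks (B₁ + lam • B₂ + μ • B₃)
      (Matrix.replicateCol (Fin 1) (B₃ *ᵥ y)) (Matrix.replicateRow (Fin 1) c) 0 with hJdef
  set M : ℂ × ℂ → Matrix (Fin m ⊕ Fin 1) (Fin m ⊕ Fin 1) ℂ :=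
    fun x => Matrix.fromBlocks (B₁ + x.1 • B₂ + x.2 • B₃)
      (Matrix.replicateCol (Fin 1) (B₃ *ᵥ y)) (Matrix.replicateRow (Fin 1) c) 0 with hMdef
  set x₀ : ℂ × ℂ := (lam, μ) with hx₀
  have hMx₀ : M x₀ = J := rfl
  set e : (Fin m ⊕ Fin 1) → ℂ := Sum.elim 0 1 with he
  -- entries of M are analytic everywhere
  have hentry : ∀ (x : ℂ × ℂ) (i j : Fin m ⊕ Fin 1),
      AnalyticAt ℂ (fun x => M x i j) x := by
    intro x i j
    rcases i with i | i <;> rcases j with j | j <;>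
      simp only [hMdef, Matrix.fromBlocks_apply₁₁, Matrix.fromBlocks_apply₁₂,
        Matrix.fromBlocks_apply₂₁, Matrix.fromBlocks_apply₂₂,
        Matrix.add_apply, Matrix.smul_apply, smul_eq_mul]
    · exact (analyticAt_const.add (analyticAt_fst.mul analyticAt_const)).add
        (analyticAt_snd.mul analyticAt_const)
    · exact analyticAt_const
    · exact analyticAt_const
    · exact analyticAt_const
  have hdet : ∀ x : ℂ × ℂ, AnalyticAt ℂ (fun x => (M x).det) x :=
    fun x => analyticAt_matrix_det (fun i j => hentry x i j)
  have hdetJ : (J).det ≠ 0 :=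
    isUnit_iff_ne_zero.mp ((Matrix.isUnit_iff_isUnit_det J).mp hJ)
  have hJinj : Function.Injective (J.mulVec) :=
    Matrix.mulVec_injective_iff_isUnit.mpr hJ
  -- the solution candidate via Cramer's rule
  set u : ℂ × ℂ → (Fin m ⊕ Fin 1) → ℂ :=
    fun x => ((M x).det)⁻¹ • ((M x).cramer e) with hudef
  have hMu_of : ∀ x : ℂ × ℂ, (M x).det ≠ 0 → M x *ᵥ u x = e := by
    intro x hx
    show M x *ᵥ (((M x).det)⁻¹ • ((M x).cramer e)) = e
    rw [Matrix.mulVec_smul, Matrix.mulVec_cramer, smul_smul, inv_mul_cancel₀ hx, one_smul]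
  have hucomp : ∀ i, AnalyticAt ℂ (fun x => u x i) x₀ := by
    intro i
    have h1 : (fun x => u x i)
        = fun x => ((M x).det)⁻¹ * ((M x).updateCol i e).det := by
      funext x
      show ((M x).det)⁻¹ * ((M x).cramer e) i = _
      rw [Matrix.cramer_apply]
    rw [h1]
    refine AnalyticAt.mul (AnalyticAt.inv (hdet x₀) (by rw [hMx₀]; exact hdetJ)) ?_
    refine analyticAt_matrix_det (fun r s => ?_)
    by_cases hs : s = i
    · simp only [Matrix.updateCol_apply, hs, if_pos rfl]
      exact analyticAt_const
    · simp only [Matrix.updateCol_apply, if_neg hs]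
      exact hentry x₀ r s
  have hu₀ : u x₀ = Sum.elim y 0 := by
    apply hJinj
    have h1 : J *ᵥ u x₀ = e := by
      have := hMu_of x₀ (by rw [hMx₀]; exact hdetJ)
      rwa [hMx₀] at this
    have h2 : J *ᵥ Sum.elim y 0 = e := by
      rw [hJdef, Matrix.fromBlocks_mulVec]
      ext (i | i) <;>
        simp [hB, hc, Matrix.replicateRow_mulVec_eq_const, he]
    rw [show J.mulVec (u x₀) = J *ᵥ u x₀ from rfl, h1, h2]
  have hev : ∀ᶠ x in nhds x₀, (M x).det ≠ 0 :=
    (hdet x₀).continuousAt.eventually_ne (by rw [hMx₀]; exact hdetJ)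
  have hMu : ∀ᶠ x in nhds x₀, M x *ᵥ u x = e := hev.mono fun x hx => hMu_of x hx
  -- derivative of entries in the second variable
  set Q : Matrix (Fin m ⊕ Fin 1) (Fin m ⊕ Fin 1) ℂ :=
    Matrix.fromBlocks B₃ 0 0 (0 : Matrix (Fin 1) (Fin 1) ℂ) with hQdef
  have hQ : ∀ i j, HasDerivAt (fun t : ℂ => M (lam, t) i j) (Q i j) μ := by
    intro i j
    rcases i with i | i <;> rcases j with j | j <;>
      simp only [hMdef, hQdef, Matrix.fromBlocks_apply₁₁, Matrix.fromBlocks_apply₁₂,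
        Matrix.fromBlocks_apply₂₁, Matrix.fromBlocks_apply₂₂,
        Matrix.add_apply, Matrix.smul_apply, smul_eq_mul, Matrix.zero_apply]
    · simpa using ((hasDerivAt_id μ).mul_const (B₃ i j)).const_add (B₁ i j + lam * B₂ i j)
    · exact hasDerivAt_const μ _
    · exact hasDerivAt_const μ _
    · exact hasDerivAt_const μ _
  have hlt : Filter.Tendsto (fun t : ℂ => ((lam, t) : ℂ × ℂ)) (nhds μ) (nhds x₀) := by
    rw [hx₀]
    exact Filter.Tendsto.prodMk_nhds tendsto_const_nhds tendsto_id
  have hui : ∀ i, AnalyticAt ℂ (fun t : ℂ => u (lam, t) i) μ := by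
    intro i
    have : AnalyticAt ℂ ((fun x => u x i) ∘ (fun t : ℂ => ((lam, t) : ℂ × ℂ))) μ :=
      (hucomp i).comp (analyticAt_const.prod analyticAt_id)
    exact this
  set v : (Fin m ⊕ Fin 1) → ℂ := fun i => deriv (fun t => u (lam, t) i) μ with hvdef
  have hv : ∀ i, HasDerivAt (fun t => u (lam, t) i) (v i) μ := fun i =>
    ((hui i).differentiableAt).hasDerivAt
  have hsum : Q *ᵥ (Sum.elim y 0) + J *ᵥ v = 0 := by
    funext i
    have h1 : HasDerivAt (fun t => ∑ j, M (lam, t) i j * u (lam, t) j)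
        (∑ j, (Q i j * u x₀ j + M x₀ i j * v j)) μ :=
      HasDerivAt.fun_sum fun j _ => (hQ i j).mul (hv j)
    have h2 : (fun t => ∑ j, M (lam, t) i j * u (lam, t) j) =ᶠ[nhds μ]
        (fun _ => e i) := by
      filter_upwards [hlt.eventually hMu] with t ht
      have := congrFun ht i
      simpa [Matrix.mulVec, dotProduct] using this
    have h3 : HasDerivAt (fun _ : ℂ => e i) (∑ j, (Q i j * u x₀ j + M x₀ i j * v j)) μ :=
      h1.congr_of_eventuallyEq h2.symm
    have h4 : (∑ j, (Q i j * u x₀ j + M x₀ i j * v j)) = 0 :=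
      h3.unique (hasDerivAt_const μ (e i))
    have h5 : (Q *ᵥ (Sum.elim y 0) + J *ᵥ v) i
        = ∑ j, (Q i j * u x₀ j + M x₀ i j * v j) := by
      rw [hu₀, hMx₀] at *
      simp [Matrix.mulVec, dotProduct, Finset.sum_add_distrib, hu₀, hMx₀]
    rw [h5, h4]
    rfl
  have hQy : Q *ᵥ (Sum.elim y 0) = Sum.elim (B₃ *ᵥ y) 0 := by
    rw [hQdef, Matrix.fromBlocks_mulVec]
    ext (i | i) <;> simp
  have hb : v (Sum.inr 0) ≠ 0 := by
    intro h0
    set w : Fin m → ℂ := fun i => v (Sum.inl i) with hwdef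
    have hvw : v = Sum.elim w 0 := by
      funext i
      rcases i with i | i
      · rfl
      · have : i = 0 := Subsingleton.elim i 0
        rw [this]
        exact h0
    have hJw : J *ᵥ (Sum.elim w 0) = -(Sum.elim (B₃ *ᵥ y) 0) := by
      rw [← hvw]
      have := congrArg (fun z => z - Q *ᵥ (Sum.elim y 0)) hsum
      simp only [add_sub_cancel_left, zero_sub] at this
      rw [this, hQy]
    have hBw : (B₁ + lam • B₂ + μ • B₃) *ᵥ w = -(B₃ *ᵥ y) := by
      funext i0
      have := congrFun hJw (Sum.inl i0)
      rw [hJdef, Matrix.fromBlocks_mulVec] at this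
      simpa using this
    have hcw : c ⬝ᵥ w = 0 := by
      have := congrFun hJw (Sum.inr 0)
      rw [hJdef, Matrix.fromBlocks_mulVec] at this
      simpa [Matrix.replicateRow_mulVec_eq_const] using this
    have hk : J *ᵥ (Sum.elim w 1) = 0 := by
      rw [hJdef, Matrix.fromBlocks_mulVec]
      ext (i | i)
      · have h6 : ((Sum.elim w (1 : Fin 1 → ℂ)) ∘ Sum.inl) = w := rfl
        have h7 : ((Sum.elim w (1 : Fin 1 → ℂ)) ∘ Sum.inr) = 1 := rfl
        simp only [Sum.elim_inl, h6, h7, hBw]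
        have h8 : (Matrix.replicateCol (Fin 1) (B₃ *ᵥ y) *ᵥ (1 : Fin 1 → ℂ)) i = (B₃ *ᵥ y) i := by
          simp [Matrix.mulVec, dotProduct, Matrix.replicateCol_apply]
        simp [h8]
      · have h6 : ((Sum.elim w (1 : Fin 1 → ℂ)) ∘ Sum.inl) = w := rfl
        simp [h6, Matrix.replicateRow_mulVec_eq_const, hcw]
    have hzero : Sum.elim w (1 : Fin 1 → ℂ) = 0 :=
      hJinj (by rw [show J.mulVec (Sum.elim w 1) = J *ᵥ (Sum.elim w 1) from rfl, hk,
        Matrix.mulVec_zero])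
    have := congrFun hzero (Sum.inr 0)
    simp at this
  -- the map Φ = (fst, α)
  set α : ℂ × ℂ → ℂ := fun x => u x (Sum.inr 0) with hαdef
  have hα : AnalyticAt ℂ α x₀ := hucomp (Sum.inr 0)
  have hα₀ : α x₀ = 0 := by
    show u x₀ (Sum.inr 0) = 0
    rw [hu₀]
    rfl
  set Φ : ℂ × ℂ → ℂ × ℂ := fun x => (x.1, α x) with hΦdef
  have hΦa : AnalyticAt ℂ Φ x₀ := analyticAt_fst.prod hα
  set L : (ℂ × ℂ) →L[ℂ] ℂ := fderiv ℂ α x₀ with hLdef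
  have hαL : HasFDerivAt α L x₀ := hα.differentiableAt.hasFDerivAt
  set a : ℂ := L (1, 0) with hadef
  set b : ℂ := L (0, 1) with hbdef
  have hbv : b = v (Sum.inr 0) := by
    have h1 : HasDerivAt (fun t : ℂ => ((lam, t) : ℂ × ℂ)) ((0 : ℂ), (1 : ℂ)) μ :=
      (hasDerivAt_const μ lam).prodMk (hasDerivAt_id μ)
    have h1' : HasFDerivAt α L ((fun t : ℂ => ((lam, t) : ℂ × ℂ)) μ) := hαL
    have h2 : HasDerivAt (fun t : ℂ => α (lam, t)) (L (0, 1)) μ :=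
      h1'.comp_hasDerivAt μ h1
    exact h2.unique (hv (Sum.inr 0))
  have hb0 : b ≠ 0 := by rw [hbv]; exact hb
  set Ψ : (ℂ × ℂ) ≃L[ℂ] (ℂ × ℂ) := shearEquiv a b hb0 with hΨdef
  have hΨfd : HasFDerivAt Φ (Ψ : (ℂ × ℂ) →L[ℂ] (ℂ × ℂ)) x₀ := by
    have hfst : HasFDerivAt (fun x : ℂ × ℂ => x.1)
        (ContinuousLinearMap.fst ℂ ℂ ℂ) x₀ := hasFDerivAt_fst
    have h := hfst.prodMk hαL
    have heq : (ContinuousLinearMap.fst ℂ ℂ ℂ).prod L = (Ψ : (ℂ × ℂ) →L[ℂ] (ℂ × ℂ)) := by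
      apply ContinuousLinearMap.ext
      intro q
      have hq : q = q.1 • ((1 : ℂ), (0 : ℂ)) + q.2 • ((0 : ℂ), (1 : ℂ)) := by
        simp [Prod.ext_iff]
      have hLq : L q = a * q.1 + b * q.2 := by
        conv_lhs => rw [hq]
        rw [L.map_add, L.map_smul, L.map_smul]
        simp only [← hadef, ← hbdef, smul_eq_mul]
        ring
      simp only [ContinuousLinearMap.prod_apply, ContinuousLinearMap.coe_fst', hLq]
      rw [hΨdef, ContinuousLinearEquiv.coe_coe, shearEquiv_apply]
    rwa [heq] at h
  have hstrict : HasStrictFDerivAt Φ (Ψ : (ℂ × ℂ) →L[ℂ] (ℂ × ℂ)) x₀ := by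
    have h := hΦa.hasStrictFDerivAt
    rwa [hΨfd.fderiv] at h
  set F : OpenPartialHomeomorph (ℂ × ℂ) (ℂ × ℂ) := hstrict.toOpenPartialHomeomorph Φ with hFdef
  have hFsource : x₀ ∈ F.source := hstrict.mem_toOpenPartialHomeomorph_source
  have hFcoe : ⇑F = Φ := hstrict.toOpenPartialHomeomorph_coe
  have hΦx₀ : Φ x₀ = ((lam : ℂ), (0 : ℂ)) := by
    show (x₀.1, α x₀) = _
    rw [hα₀]
  have hsymm_an : AnalyticAt ℂ F.symm ((lam : ℂ), (0 : ℂ)) := by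
    rw [← hΦx₀]
    refine F.analyticAt_symm' (i := Ψ) hFsource ?_ ?_
    · rw [hFcoe]; exact hΦa
    · rw [hFcoe]; exact hΨfd.fderiv
  set G : ℂ → ℂ × ℂ := fun s => F.symm (s, 0) with hGdef
  have hpr : AnalyticAt ℂ (fun s : ℂ => ((s, (0 : ℂ)) : ℂ × ℂ)) lam :=
    (analyticAt_id).prod analyticAt_const
  have hGan : AnalyticAt ℂ G lam := by
    have h := AnalyticAt.comp (g := ⇑F.symm) (f := fun s : ℂ => ((s, (0 : ℂ)) : ℂ × ℂ))
      (x := lam) hsymm_an hpr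
    exact h
  have hGlam : G lam = x₀ := by
    show F.symm (lam, 0) = x₀
    rw [← hΦx₀, ← hFcoe]
    exact F.left_inv hFsource
  have hΦmem : ((lam : ℂ), (0 : ℂ)) ∈ F.target := by
    rw [← hΦx₀, ← hFcoe]
    exact F.map_source hFsource
  have hcont0 : Filter.Tendsto (fun s : ℂ => ((s, (0 : ℂ)) : ℂ × ℂ)) (nhds lam)
      (nhds ((lam : ℂ), (0 : ℂ))) := hpr.continuousAt
  have htgt : ∀ᶠ s in nhds lam, ((s, (0 : ℂ)) : ℂ × ℂ) ∈ F.target :=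
    hcont0.eventually (F.open_target.eventually_mem hΦmem)
  have hright : ∀ᶠ s in nhds lam, Φ (G s) = ((s : ℂ), (0 : ℂ)) := by
    filter_upwards [htgt] with s hs
    rw [← hFcoe]
    exact F.right_inv hs
  have hGc : Filter.Tendsto G (nhds lam) (nhds x₀) := by
    have h := hGan.continuousAt
    rwa [ContinuousAt, hGlam] at h
  have hMuG : ∀ᶠ s in nhds lam, M (G s) *ᵥ u (G s) = e := hGc.eventually hMu
  refine ⟨fun s => (G s).2, fun s i => u (G s) (Sum.inl i), ?_, ?_, ?_, ?_, ?_⟩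
  · exact analyticAt_snd.comp hGan
  · rw [analyticAt_pi_iff]
    intro i
    have h1 : AnalyticAt ℂ (fun x : ℂ × ℂ => u x (Sum.inl i)) (G lam) := by
      rw [hGlam]; exact hucomp (Sum.inl i)
    exact h1.comp hGan
  · show (G lam).2 = μ
    rw [hGlam]
  · funext i
    show u (G lam) (Sum.inl i) = y i
    rw [hGlam, hu₀]
    rfl
  · filter_upwards [hright, hMuG] with s hs1 hs2
    have hGs1 : (G s).1 = s := congrArg Prod.fst hs1
    have hαs : α (G s) = 0 := congrArg Prod.snd hs1
    have hinr : (u (G s)) ∘ Sum.inr = 0 := by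
      funext j
      have hj : j = 0 := Subsingleton.elim j 0
      rw [Function.comp_apply, hj]
      exact hαs
    rw [hMdef, Matrix.fromBlocks_mulVec] at hs2
    constructor
    · funext i
      have h := congrFun hs2 (Sum.inl i)
      simp only [Sum.elim_inl, hinr, Matrix.mulVec_zero, add_zero, he, Sum.elim_inl] at h
      rw [hGs1] at h
      exact h
    · have h := congrFun hs2 (Sum.inr 0)
      simp only [Sum.elim_inr, hinr, Matrix.zero_mulVec, Matrix.mulVec_zero, add_zero, he,
        Sum.elim_inr, Matrix.replicateRow_mulVec_eq_const, Function.const_apply] at h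
      exact h

private lemma proj_identity (n p : ℕ) (A₁ A₂ A₃ : Matrix (Fin n) (Fin n) ℂ)
    (W V : Matrix (Fin n) (Fin p) ℂ) (lam μ : ℂ) :
    Wᵀ * (A₁ + lam • A₂ + μ • A₃) * V
      = Wᵀ * A₁ * V + lam • (Wᵀ * A₂ * V) + μ • (Wᵀ * A₃ * V) := by
  rw [Matrix.mul_add, Matrix.mul_add, Matrix.add_mul, Matrix.add_mul,
    Matrix.mul_smul, Matrix.smul_mul, Matrix.mul_smul, Matrix.smul_mul]


/-- **Projected nonlinearized problem.**
Let `W, V ∈ ℂ^{n×p}` and suppose `(λ,z,μ,y)` is such that `cᵀy = 1` and the Jacobian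
`J(λ,μ,y)` is invertible.  Then `(λ,z,μ,y)` solves the projected two-parameter eigenvalue
problem `Wᵀ(A₁+λA₂+μA₃)Vz = 0`, `(B₁+λB₂+μB₃)y = 0`, iff there exist functions `g, Y`
analytic at `λ`, with `g(λ) = μ`, `Y(λ) = y`, satisfying `B(s,g(s))Y(s) = 0`, `cᵀY(s) = 1`
near `λ`, and `(WᵀA₁V + λWᵀA₂V + g(λ)WᵀA₃V)z = 0`. -/
theorem projected_nonlinearized_problem
    (n m p : ℕ) (A₁ A₂ A₃ : Matrix (Fin n) (Fin n) ℂ)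
    (B₁ B₂ B₃ : Matrix (Fin m) (Fin m) ℂ) (c : Fin m → ℂ)
    (W V : Matrix (Fin n) (Fin p) ℂ)
    (lam μ : ℂ) (z : Fin p → ℂ) (y : Fin m → ℂ)
    (hc : c ⬝ᵥ y = 1)
    (hJ : IsUnit (Matrix.fromBlocks (B₁ + lam • B₂ + μ • B₃)
        (Matrix.replicateCol (Fin 1) (B₃ *ᵥ y)) (Matrix.replicateRow (Fin 1) c) 0)) :
    ((Wᵀ * (A₁ + lam • A₂ + μ • A₃) * V) *ᵥ z = 0 ∧
      (B₁ + lam • B₂ + μ • B₃) *ᵥ y = 0)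
    ↔
    (∃ (g : ℂ → ℂ) (Y : ℂ → (Fin m → ℂ)),
      AnalyticAt ℂ g lam ∧ AnalyticAt ℂ Y lam ∧
      g lam = μ ∧ Y lam = y ∧
      (∀ᶠ s in nhds lam,
        (B₁ + s • B₂ + g s • B₃) *ᵥ (Y s) = 0 ∧ c ⬝ᵥ (Y s) = 1) ∧
      (Wᵀ * A₁ * V + lam • (Wᵀ * A₂ * V) + g lam • (Wᵀ * A₃ * V)) *ᵥ z = 0) := by
  constructor
  · rintro ⟨h1, h2⟩
    obtain ⟨g, Y, hg, hY, hgl, hYl, hev⟩ :=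
      exists_analytic_branch m B₁ B₂ B₃ c lam μ y hc hJ h2
    refine ⟨g, Y, hg, hY, hgl, hYl, hev, ?_⟩
    rw [hgl, ← proj_identity n p A₁ A₂ A₃ W V lam μ]
    exact h1
  · rintro ⟨g, Y, hg, hY, hgl, hYl, hev, hz⟩
    have h0 := hev.self_of_nhds
    refine ⟨?_, ?_⟩
    · rw [proj_identity n p A₁ A₂ A₃ W V lam μ, ← hgl]
      exact hz
    · have := h0.1
      rwa [hgl, hYl] at this
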